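/- Let κ be an uncountable cardinal with κ^{<κ} = κ and let L be a linear order of cardinality κ that is κ-universal (every linear order of cardinality strictly less than κ order-embeds into L) and κ-ultrahomogeneous (every order isomorphism between two subsets of L of cardinality strictly less than κ extends to an order automorphism of L). Then there is no injective continuous group homomorphism from the group Aut(ℚ,<) of order automorphisms of the rationals into the group Aut(L) of order automorphisms of L. -/

import Mathlib

set_option linter.unusedSectionVars false
set_option maxHeartbeats 1000000

/-- The topology of pointwise convergence on the permutation group of a set `V`
(regarded as a discrete space): the topology induced from the product topology
on `V → V` where `V` carries the discrete topology. -/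
instance permPointwiseTopology (V : Type*) : TopologicalSpace (Equiv.Perm V) :=
  TopologicalSpace.induced (fun g : Equiv.Perm V => (g : V → V))
    (@Pi.topologicalSpace V (fun _ => V) (fun _ => ⊥))

/-- The automorphism group of a binary relational structure `(V, r)`, realized as the
subgroup of `Equiv.Perm V` of permutations preserving the relation `r` in both directions. -/
def relAut {V : Type*} (r : V → V → Prop) : Subgroup (Equiv.Perm V) where
  carrier := {g : Equiv.Perm V | ∀ x y : V, r (g x) (g y) ↔ r x y}
  one_mem' := fun _ _ => Iff.rfl
  mul_mem' := by
    intro a b ha hb x y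
    exact (ha (b x) (b y)).trans (hb x y)
  inv_mem' := by
    intro a ha x y
    have h := (ha (a⁻¹ x) (a⁻¹ y)).symm
    simpa using h

namespace NoContEmb

/-- Continuity gives: for each point x of W, a finite set F of V such that any
relAut element fixing F pointwise maps (under e) to an element fixing x. -/
lemma cont_exists_finset {V W : Type*} {rV : V → V → Prop} {rW : W → W → Prop}
    (e : relAut rV →* relAut rW) (hcont : Continuous e) (x : W) :
    ∃ F : Finset V, ∀ g : relAut rV,
      (∀ q ∈ F, (g : Equiv.Perm V) q = q) → ((e g : Equiv.Perm W) x = x) := by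
  classical
  letI : TopologicalSpace W := ⊥
  letI : TopologicalSpace V := ⊥
  have hdisc : @DiscreteTopology W ⊥ := @DiscreteTopology.mk W ⊥ rfl
  have hyopen : IsOpen ({x} : Set W) := @isOpen_discrete W ⊥ hdisc {x}
  have hevalcont : Continuous (fun f : W → W => f x) := continuous_apply x
  have hcoe : Continuous (fun g : Equiv.Perm W => (g : W → W)) := continuous_induced_dom
  have hval : Continuous (fun h : relAut rW => (h : Equiv.Perm W)) := continuous_subtype_val
  have hS : IsOpen {h : relAut rW | (h : Equiv.Perm W) x = x} := by
    have : {h : relAut rW | (h : Equiv.Perm W) x = x}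
        = (fun h : relAut rW => ((h : Equiv.Perm W) : W → W) x) ⁻¹' {x} := by
      ext h; simp
    rw [this]
    exact (hevalcont.comp (hcoe.comp hval)).isOpen_preimage {x} hyopen
  have hU : IsOpen (e ⁻¹' {h : relAut rW | (h : Equiv.Perm W) x = x}) :=
    hS.preimage hcont
  rw [isOpen_induced_iff] at hU
  obtain ⟨V₁, hV₁, hV₁eq⟩ := hU
  rw [isOpen_induced_iff] at hV₁
  obtain ⟨W₁, hW₁, hW₁eq⟩ := hV₁
  have h1mem : ((1 : Equiv.Perm V) : V → V) ∈ W₁ := by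
    have : (1 : relAut rV) ∈ e ⁻¹' {h : relAut rW | (h : Equiv.Perm W) x = x} := by
      simp [map_one]
    rw [← hV₁eq] at this
    rw [← hW₁eq] at this
    exact this
  rw [isOpen_pi_iff] at hW₁
  obtain ⟨I, u, hu, hsub⟩ := hW₁ _ h1mem
  refine ⟨I, fun g hg => ?_⟩
  have hgW : ((g : Equiv.Perm V) : V → V) ∈ W₁ := by
    apply hsub
    intro q hq
    have := (hu q hq).2
    simpa [hg q hq] using this
  have : g ∈ e ⁻¹' {h : relAut rW | (h : Equiv.Perm W) x = x} := by
    rw [← hV₁eq, ← hW₁eq]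
    exact hgW
  exact this

/-! ### Elements of `relAut` of a linear order are strictly monotone -/

section Monotone
variable {W : Type*} [LinearOrder W]

abbrev AutW (W : Type*) [LinearOrder W] := relAut (fun x y : W => x < y)

lemma lt_iff (f : AutW W) {x y : W} : (f : Equiv.Perm W) x < (f : Equiv.Perm W) y ↔ x < y :=
  f.2 x y

lemma mono_lt (f : AutW W) {x y : W} (h : x < y) :
    (f : Equiv.Perm W) x < (f : Equiv.Perm W) y := (lt_iff f).2 h

lemma mono_le (f : AutW W) {x y : W} (h : x ≤ y) :
    (f : Equiv.Perm W) x ≤ (f : Equiv.Perm W) y := by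
  rcases eq_or_lt_of_le h with rfl | h
  · exact le_rfl
  · exact (mono_lt f h).le

lemma pow_apply_le (f : AutW W) {x : W} (h : (f : Equiv.Perm W) x ≤ x) (n : ℕ) :
    ((f ^ n : AutW W) : Equiv.Perm W) x ≤ x := by
  induction n with
  | zero => simp
  | succ k ih =>
    have hps : (f ^ (k+1) : AutW W) = f ^ k * f := pow_succ f k
    rw [hps]
    have hmul : ((f ^ k * f : AutW W) : Equiv.Perm W) x
        = ((f ^ k : AutW W) : Equiv.Perm W) ((f : Equiv.Perm W) x) := by
      rw [MulMemClass.coe_mul, Equiv.Perm.mul_apply]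
    rw [hmul]
    calc ((f ^ k : AutW W) : Equiv.Perm W) ((f : Equiv.Perm W) x)
        ≤ ((f ^ k : AutW W) : Equiv.Perm W) x := mono_le _ h
      _ ≤ x := ih

lemma lt_pow_apply (f : AutW W) {x : W} (h : x < (f : Equiv.Perm W) x) {n : ℕ} (hn : 0 < n) :
    x < ((f ^ n : AutW W) : Equiv.Perm W) x := by
  induction n with
  | zero => omega
  | succ k ih =>
    rcases Nat.eq_zero_or_pos k with rfl | hk
    · simpa using h
    · have hps : (f ^ (k+1) : AutW W) = f ^ k * f := pow_succ f k
      rw [hps, MulMemClass.coe_mul, Equiv.Perm.mul_apply]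
      calc x < ((f ^ k : AutW W) : Equiv.Perm W) x := ih hk
        _ < ((f ^ k : AutW W) : Equiv.Perm W) ((f : Equiv.Perm W) x) := mono_lt _ h

end Monotone

/-! ### Translations of ℚ -/

abbrev AutQ := relAut (fun x y : ℚ => x < y)

/-- translation by a, as an element of Aut(ℚ,<) -/
def tau (a : ℚ) : AutQ :=
  ⟨Equiv.addRight a, by intro x y; simp⟩

@[simp] lemma tau_apply (a x : ℚ) : ((tau a : Equiv.Perm ℚ)) x = x + a := rfl

lemma tau_mul (a b : ℚ) : tau a * tau b = tau (a + b) := by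
  apply Subtype.ext
  apply Equiv.ext
  intro x
  show ((tau a : Equiv.Perm ℚ) * (tau b : Equiv.Perm ℚ)) x = _
  rw [Equiv.Perm.mul_apply]
  simp [tau_apply]
  ring

@[simp] lemma tau_zero : tau 0 = 1 := by
  apply Subtype.ext; apply Equiv.ext; intro x; simp [tau]

lemma tau_pow (a : ℚ) (n : ℕ) : (tau a) ^ n = tau (n * a) := by
  induction n with
  | zero => simp
  | succ k ih =>
    rw [pow_succ, ih, tau_mul]
    congr 1
    push_cast
    ring

lemma tau_inv_apply (a : ℚ) (x : ℚ) :
    (((tau a)⁻¹ : AutQ) : Equiv.Perm ℚ) x = x - a := by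
  show ((tau a : Equiv.Perm ℚ))⁻¹ x = x - a
  rw [Equiv.Perm.inv_def]
  show (Equiv.addRight a).symm x = x - a
  simp [Equiv.addRight, sub_eq_add_neg]

/-! ### Piecewise-linear gap movers -/

/-- piecewise linear map: identity outside (u,v), sends a to b inside -/
def pl (u v a b x : ℚ) : ℚ :=
  if x ≤ u then x else if v ≤ x then x
  else if x ≤ a then u + (x - u) * ((b - u) / (a - u))
  else b + (x - a) * ((v - b) / (v - a))

section PL
variable {u v a b : ℚ} (hua : u < a) (hub : u < b) (hav : a < v) (hbv : b < v)

lemma pl_low {x : ℚ} (hx : x ≤ u) : pl u v a b x = x := by simp [pl, hx]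

include hua hav in
lemma pl_high {x : ℚ} (hx : v ≤ x) : pl u v a b x = x := by
  have : ¬ x ≤ u := by
    push_neg
    exact lt_of_lt_of_le (hua.trans hav) hx
  simp [pl, this, hx]

include hua hav in
lemma pl_mid1 {x : ℚ} (h1 : u < x) (h2 : x ≤ a) :
    pl u v a b x = u + (x - u) * ((b - u) / (a - u)) := by
  have h3 : ¬ x ≤ u := not_le.2 h1
  have h4 : ¬ v ≤ x := not_le.2 (lt_of_le_of_lt h2 hav)
  simp [pl, h3, h4, h2]

include hua hav in
lemma pl_mid2 {x : ℚ} (h1 : a < x) (h2 : x < v) :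
    pl u v a b x = b + (x - a) * ((v - b) / (v - a)) := by
  have h3 : ¬ x ≤ u := not_le.2 (hua.trans h1)
  have h4 : ¬ v ≤ x := not_le.2 h2
  have h5 : ¬ x ≤ a := not_le.2 h1
  simp [pl, h3, h4, h5]

include hua hub hav hbv in
lemma pl_mid1_bounds {x : ℚ} (h1 : u < x) (h2 : x ≤ a) :
    u < pl u v a b x ∧ pl u v a b x ≤ b := by
  rw [pl_mid1 hua hav h1 h2]
  have hs : 0 < (b - u) / (a - u) := div_pos (by linarith) (by linarith)
  have key1 : (a - u) * ((b - u) / (a - u)) = b - u := by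
    rw [mul_comm, div_mul_cancel₀ _ (by linarith : a - u ≠ 0)]
  constructor
  · nlinarith
  · nlinarith

include hua hub hav hbv in
lemma pl_mid2_bounds {x : ℚ} (h1 : a < x) (h2 : x < v) :
    b < pl u v a b x ∧ pl u v a b x < v := by
  rw [pl_mid2 hua hav h1 h2]
  have ht : 0 < (v - b) / (v - a) := div_pos (by linarith) (by linarith)
  have key2 : (v - a) * ((v - b) / (v - a)) = v - b := by
    rw [mul_comm, div_mul_cancel₀ _ (by linarith : v - a ≠ 0)]
  constructor
  · nlinarith
  · nlinarith

include hua hub hav hbv in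
lemma pl_strictMono : StrictMono (pl u v a b) := by
  intro x y hxy
  have hs : 0 < (b - u) / (a - u) := div_pos (by linarith) (by linarith)
  have ht : 0 < (v - b) / (v - a) := div_pos (by linarith) (by linarith)
  rcases le_or_gt x u with hx1 | hx1
  · rw [pl_low hx1]
    rcases le_or_gt y u with hy1 | hy1
    · rw [pl_low hy1]; exact hxy
    · rcases le_or_gt y a with hy2 | hy2
      · exact lt_of_le_of_lt hx1 (pl_mid1_bounds hua hub hav hbv hy1 hy2).1
      · rcases lt_or_ge y v with hy3 | hy3
        · have h5 := (pl_mid2_bounds hua hub hav hbv hy2 hy3).1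
          have : u < pl u v a b y := lt_trans hub h5
          linarith
        · rw [pl_high hua hav hy3]; exact hxy
  · rcases le_or_gt x a with hx2 | hx2
    · have hx := pl_mid1_bounds hua hub hav hbv hx1 hx2
      rcases le_or_gt y a with hy2 | hy2
      · have hy1 : u < y := lt_trans hx1 hxy
        rw [pl_mid1 hua hav hx1 hx2, pl_mid1 hua hav hy1 hy2]
        have : (x - u) * ((b - u) / (a - u)) < (y - u) * ((b - u) / (a - u)) := by
          apply mul_lt_mul_of_pos_right _ hs
          linarith
        linarith
      · rcases lt_or_ge y v with hy3 | hy3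
        · have hy := (pl_mid2_bounds hua hub hav hbv hy2 hy3).1
          linarith [hx.2]
        · rw [pl_high hua hav hy3]
          linarith [hx.2]
    · rcases lt_or_ge x v with hx3 | hx3
      · have hx := pl_mid2_bounds hua hub hav hbv hx2 hx3
        rcases lt_or_ge y v with hy3 | hy3
        · have hy2 : a < y := lt_trans hx2 hxy
          rw [pl_mid2 hua hav hx2 hx3, pl_mid2 hua hav hy2 hy3]
          have : (x - a) * ((v - b) / (v - a)) < (y - a) * ((v - b) / (v - a)) := by
            apply mul_lt_mul_of_pos_right _ ht
            linarith
          linarith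
        · rw [pl_high hua hav hy3]
          linarith [hx.2]
      · rw [pl_high hua hav hx3, pl_high hua hav (hx3.trans hxy.le)]
        exact hxy

include hua hub hav hbv in
lemma pl_inverse : ∀ x, pl u v b a (pl u v a b x) = x := by
  intro x
  rcases le_or_gt x u with hx1 | hx1
  · rw [pl_low hx1, pl_low hx1]
  · rcases le_or_gt x a with hx2 | hx2
    · have hb := pl_mid1_bounds hua hub hav hbv hx1 hx2
      rw [pl_mid1 hua hav hx1 hx2]
      rw [pl_mid1 hub hbv (by rw [pl_mid1 hua hav hx1 hx2] at hb; exact hb.1)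
        (by rw [pl_mid1 hua hav hx1 hx2] at hb; exact hb.2)]
      have h1 : a - u ≠ 0 := by linarith
      have h2 : b - u ≠ 0 := by linarith
      field_simp
      ring
    · rcases lt_or_ge x v with hx3 | hx3
      · have hb := pl_mid2_bounds hua hub hav hbv hx2 hx3
        rw [pl_mid2 hua hav hx2 hx3]
        rw [pl_mid2 hub hbv (by rw [pl_mid2 hua hav hx2 hx3] at hb; exact hb.1)
          (by rw [pl_mid2 hua hav hx2 hx3] at hb; exact hb.2)]
        have h1 : v - a ≠ 0 := by linarith
        have h2 : v - b ≠ 0 := by linarith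
        field_simp
        ring
      · rw [pl_high hua hav hx3, pl_high hub hbv hx3]

end PL

def plPerm {u v a b : ℚ} (hua : u < a) (hub : u < b) (hav : a < v) (hbv : b < v) : AutQ :=
  ⟨⟨pl u v a b, pl u v b a, pl_inverse hua hub hav hbv, pl_inverse hub hua hbv hav⟩,
    by intro x y; exact (pl_strictMono hua hub hav hbv).lt_iff_lt⟩

lemma plPerm_apply {u v a b : ℚ} (hua : u < a) (hub : u < b) (hav : a < v) (hbv : b < v) (x : ℚ) :
    ((plPerm hua hub hav hbv : Equiv.Perm ℚ)) x = pl u v a b x := rfl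

lemma plPerm_maps {u v a b : ℚ} (hua : u < a) (hub : u < b) (hav : a < v) (hbv : b < v) :
    ((plPerm hua hub hav hbv : Equiv.Perm ℚ)) a = b := by
  rw [plPerm_apply, pl_mid1 hua hav hua le_rfl]
  rw [mul_comm, div_mul_cancel₀ _ (by linarith : a - u ≠ 0)]
  ring

/-- extension lemma: a list of disjoint sorted gap-movers, quadruples (u,a,b,v) -/
lemma extlist (l : List (ℚ × ℚ × ℚ × ℚ))
    (hok : ∀ p ∈ l, p.1 < p.2.1 ∧ p.1 < p.2.2.1 ∧ p.2.1 < p.2.2.2 ∧ p.2.2.1 < p.2.2.2)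
    (hsep : l.Pairwise (fun p q => p.2.2.2 ≤ q.1)) :
    ∃ h : AutQ, (∀ x : ℚ, (∀ p ∈ l, x ≤ p.1 ∨ p.2.2.2 ≤ x) → (h : Equiv.Perm ℚ) x = x)
      ∧ (∀ p ∈ l, (h : Equiv.Perm ℚ) p.2.1 = p.2.2.1) := by
  induction l with
  | nil => exact ⟨1, fun x _ => rfl, fun p hp => absurd hp List.not_mem_nil⟩
  | cons p t ih =>
    rw [List.pairwise_cons] at hsep
    obtain ⟨hpt, hsep'⟩ := hsep
    obtain ⟨hr, hrfix, hrmap⟩ := ih (fun q hq => hok q (List.mem_cons_of_mem p hq)) hsep'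
    obtain ⟨h1, h2, h3, h4⟩ := hok p List.mem_cons_self
    refine ⟨plPerm h1 h2 h3 h4 * hr, ?_, ?_⟩
    · intro x hx
      rw [MulMemClass.coe_mul, Equiv.Perm.mul_apply]
      rw [hrfix x (fun q hq => hx q (List.mem_cons_of_mem p hq))]
      rcases hx p List.mem_cons_self with h | h
      · rw [plPerm_apply, pl_low h]
      · rw [plPerm_apply, pl_high h1 h3 h]
    · intro q hq
      rcases List.mem_cons.1 hq with rfl | hq'
      · rw [MulMemClass.coe_mul, Equiv.Perm.mul_apply]
        rw [hrfix q.2.1 (fun r hr' => Or.inl (le_trans (le_of_lt h3) (hpt r hr')))]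
        exact plPerm_maps h1 h2 h3 h4
      · rw [MulMemClass.coe_mul, Equiv.Perm.mul_apply, hrmap q hq']
        have hv : p.2.2.2 ≤ q.2.2.1 := le_trans (hpt q hq') (le_of_lt (hok q hq).2.1)
        rw [plPerm_apply, pl_high h1 h3 hv]

/-! ### The filler lemma from universality and homogeneity -/

open Cardinal

/-- order iso onto range of an order embedding -/
noncomputable def rangeIso {α β : Type*} [Preorder α] [Preorder β] (f : α ↪o β) :
    α ≃o Set.range f where
  toEquiv := Equiv.ofInjective f f.injective
  map_rel_iff' := by
    intro a b
    constructor
    · intro h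
      have : (f : α → β) a ≤ f b := h
      exact f.le_iff_le.1 this
    · intro h
      exact f.le_iff_le.2 h

lemma fill {L : Type u} [LinearOrder L] (κ : Cardinal.{u})
    (hκ : Cardinal.aleph0 < κ)
    (huniv : ∀ (Y : Type u) [LinearOrder Y], #Y < κ → Nonempty (Y ↪o L))
    (hhom : ∀ A B : Set L, #A < κ → #B < κ → ∀ f : A ≃o B,
      ∃ g : L ≃o L, ∀ a : A, g (a : L) = (f a : L))
    (A B : Set L) (hA : #A < κ) (hB : #B < κ)
    (hAB : ∀ a ∈ A, ∀ b ∈ B, a < b) :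
    ∃ x : L, (∀ a ∈ A, a < x) ∧ (∀ b ∈ B, x < b) := by
  classical
  let Y := (↥A) ⊕ₗ ((PUnit.{u+1}) ⊕ₗ (↥B))
  have hYcard : #Y < κ := by
    have h1 : #Y = #(↥A) + (1 + #(↥B)) := by
      show #(Lex _) = _
      rw [Cardinal.mk_congr (toLex (α := (↥A) ⊕ (Lex (PUnit.{u+1} ⊕ ↥B)))).symm]
      rw [Cardinal.mk_sum]
      simp only [Cardinal.lift_id]
      congr 1
      rw [Cardinal.mk_congr (toLex (α := (PUnit.{u+1}) ⊕ (↥B))).symm]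
      rw [Cardinal.mk_sum]
      simp [Cardinal.lift_id]
    rw [h1]
    exact Cardinal.add_lt_of_lt hκ.le hA
      (Cardinal.add_lt_of_lt hκ.le (lt_trans Cardinal.one_lt_aleph0 hκ) hB)
  obtain ⟨j⟩ := huniv Y hYcard
  let Z := (↥A) ⊕ₗ (↥B)
  let zToY : Z → Y := fun z =>
    match ofLex z with
    | Sum.inl a => toLex (Sum.inl a)
    | Sum.inr b => toLex (Sum.inr (toLex (Sum.inr b)))
  have hzToY : StrictMono zToY := by
    intro z w h
    rcases z with za | zb <;> rcases w with wa | wb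
    · exact Sum.Lex.inl_lt_inl_iff.2 (Sum.Lex.inl_lt_inl_iff.1 h)
    · exact Sum.Lex.inl_lt_inr _ _
    · exact absurd h (Sum.Lex.not_inr_lt_inl)
    · exact Sum.Lex.inr_lt_inr_iff.2 (Sum.Lex.inr_lt_inr_iff.2 (Sum.Lex.inr_lt_inr_iff.1 h))
  let E₁ : Z ↪o L := (OrderEmbedding.ofStrictMono _ (j.strictMono.comp hzToY))
  let E₂ : Z ↪o L := OrderEmbedding.ofStrictMono
    (fun z => match ofLex z with
      | Sum.inl a => (a : L)
      | Sum.inr b => (b : L))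
    (by
      intro z w h
      rcases z with za | zb <;> rcases w with wa | wb
      · exact Subtype.coe_lt_coe.2 (Sum.Lex.inl_lt_inl_iff.1 h)
      · exact hAB _ za.2 _ wb.2
      · exact absurd h (Sum.Lex.not_inr_lt_inl)
      · exact Subtype.coe_lt_coe.2 (Sum.Lex.inr_lt_inr_iff.1 h))
  have hZcard : #Z < κ := by
    have h1 : #Z = #(↥A) + #(↥B) := by
      rw [Cardinal.mk_congr (toLex (α := (↥A) ⊕ (↥B))).symm]
      rw [Cardinal.mk_sum]; simp [Cardinal.lift_id]
    rw [h1]; exact Cardinal.add_lt_of_lt hκ.le hA hB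
  have hS₁ : #(Set.range E₁) < κ := by
    rw [Cardinal.mk_range_eq _ E₁.injective]; exact hZcard
  have hS₂ : #(Set.range E₂) < κ := by
    rw [Cardinal.mk_range_eq _ E₂.injective]; exact hZcard
  obtain ⟨σ, hσ⟩ := hhom _ _ hS₁ hS₂ ((rangeIso E₁).symm.trans (rangeIso E₂))
  refine ⟨σ (j (toLex (Sum.inr (toLex (Sum.inl PUnit.unit))))), ?_, ?_⟩
  · intro a ha
    have key : σ (E₁ (toLex (Sum.inl ⟨a, ha⟩))) = a := by
      have := hσ ⟨E₁ (toLex (Sum.inl ⟨a, ha⟩)), Set.mem_range_self _⟩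
      rw [this]
      show (((rangeIso E₁).symm.trans (rangeIso E₂)) ⟨E₁ _, _⟩ : L) = _
      have h2 : (rangeIso E₁).symm ⟨E₁ (toLex (Sum.inl ⟨a, ha⟩)), Set.mem_range_self _⟩
          = toLex (Sum.inl ⟨a, ha⟩) := Equiv.ofInjective_symm_apply E₁.injective _
      rw [OrderIso.trans_apply, h2]
      rfl
    rw [← key]
    have : E₁ (toLex (Sum.inl ⟨a, ha⟩)) < j (toLex (Sum.inr (toLex (Sum.inl PUnit.unit)))) := by
      show j _ < j _
      exact j.strictMono (Sum.Lex.inl_lt_inr _ _)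
    exact σ.strictMono this
  · intro b hb
    have key : σ (E₁ (toLex (Sum.inr ⟨b, hb⟩))) = b := by
      have := hσ ⟨E₁ (toLex (Sum.inr ⟨b, hb⟩)), Set.mem_range_self _⟩
      rw [this]
      show (((rangeIso E₁).symm.trans (rangeIso E₂)) ⟨E₁ _, _⟩ : L) = _
      have h2 : (rangeIso E₁).symm ⟨E₁ (toLex (Sum.inr ⟨b, hb⟩)), Set.mem_range_self _⟩
          = toLex (Sum.inr ⟨b, hb⟩) := Equiv.ofInjective_symm_apply E₁.injective _
      rw [OrderIso.trans_apply, h2]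
      rfl
    rw [← key]
    have : j (toLex (Sum.inr (toLex (Sum.inl PUnit.unit)))) < E₁ (toLex (Sum.inr ⟨b, hb⟩)) := by
      show j _ < j _
      apply j.strictMono
      show toLex (Sum.inr (toLex (Sum.inl PUnit.unit)))
          < (toLex (Sum.inr (toLex (Sum.inr (⟨b, hb⟩ : ↥B)))) : Y)
      exact Sum.Lex.inr_lt_inr_iff.2 (Sum.Lex.inl_lt_inr _ _)
    exact σ.strictMono this

end NoContEmb

open Cardinal in
/-- Let `κ` be an uncountable cardinal with `κ^{<κ} = κ` and let `L` be a linear order of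
cardinality `κ` which is `κ`-universal (every linear order of cardinality `< κ` order-embeds
into it) and `κ`-ultrahomogeneous (every order isomorphism between two subsets of
cardinality `< κ` extends to an order automorphism). Then there is no injective continuous
group homomorphism from `Aut(ℚ, <)` into `Aut(L)` (both with the pointwise convergence
topology). -/
theorem no_continuous_embedding_of_AutQ_into_randomLinearOrderAut
    {L : Type u} [LinearOrder L] (κ : Cardinal.{u})
    (hκ : Cardinal.aleph0 < κ) (hpow : κ ^< κ = κ)
    (hcard : #L = κ)
    (huniv : ∀ (Y : Type u) [LinearOrder Y], #Y < κ → Nonempty (Y ↪o L))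
    (hhom : ∀ A B : Set L, #A < κ → #B < κ → ∀ f : A ≃o B,
      ∃ g : L ≃o L, ∀ a : A, g (a : L) = (f a : L)) :
    ¬ ∃ e : relAut (fun a b : ℚ => a < b) →* relAut (fun a b : L => a < b),
        Function.Injective e ∧ Continuous e := by
  classical
  open NoContEmb in
  rintro ⟨e, hinj, hcont⟩
  -- Step 1: some translation has a moved point in L
  have htau1 : tau 1 ≠ 1 := by
    intro h
    have h0 := congrArg (fun f : AutQ => (f : Equiv.Perm ℚ) 0) h
    simp only [tau_apply] at h0
    norm_num at h0
  have hetau : e (tau 1) ≠ 1 := fun h => htau1 (hinj (by rw [h, map_one]))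
  have hx₀ex : ∃ x₀ : L, ((e (tau 1) : Equiv.Perm L)) x₀ ≠ x₀ := by
    by_contra hno
    push_neg at hno
    apply hetau
    apply Subtype.ext
    apply Equiv.ext
    intro z
    simpa using hno z
  obtain ⟨x₀, hx₀ne⟩ := hx₀ex
  -- Step 2: choose a sign so that the translation moves x₀ up
  have hsign : ∃ s : ℚ, (s = 1 ∨ s = -1) ∧ x₀ < (e (tau s) : Equiv.Perm L) x₀ := by
    rcases lt_or_gt_of_ne hx₀ne with hlt | hgt
    · refine ⟨-1, Or.inr rfl, ?_⟩
      have h2 := mono_lt (e (tau (-1))) hlt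
      have h3 : (e (tau (-1)) : Equiv.Perm L) ((e (tau 1) : Equiv.Perm L) x₀) = x₀ := by
        have hmm : tau (-1) * tau 1 = 1 := by rw [tau_mul]; norm_num
        rw [← Equiv.Perm.mul_apply, ← MulMemClass.coe_mul, ← map_mul, hmm, map_one]
        rfl
      rw [h3] at h2
      exact h2
    · exact ⟨1, Or.inl rfl, hgt⟩
  obtain ⟨s, hs, hsx⟩ := hsign
  have habs : |(s : ℝ)| = 1 := by rcases hs with rfl | rfl <;> norm_num
  -- Step 3: the rational chain ρ
  set ρ : ℚ → L := fun r => (e (tau (s * r)) : Equiv.Perm L) x₀ with hρ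
  have hpos : ∀ q : ℚ, 0 < q → x₀ < ρ q := by
    intro q hq
    have hd0 : ((q.den : ℚ)) ≠ 0 := Nat.cast_ne_zero.2 q.den_nz
    have hnumpos : 0 < q.num := Rat.num_pos.2 hq
    have hn : 0 < q.num.toNat := by omega
    have hnum : ((q.num.toNat : ℤ)) = q.num := Int.toNat_of_nonneg hnumpos.le
    have hqd : (q.num : ℚ) = q * (q.den : ℚ) := (div_eq_iff hd0).1 (Rat.num_div_den q)
    have h1 : (tau (s / (q.den : ℚ))) ^ (q.den : ℕ) = tau s := by
      rw [tau_pow]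
      congr 1
      field_simp
    have h2 : (tau (s / (q.den : ℚ))) ^ (q.num.toNat) = tau (s * q) := by
      rw [tau_pow]
      congr 1
      have hcast : ((q.num.toNat : ℚ)) = (q.num : ℚ) := by exact_mod_cast hnum
      rw [hcast, hqd]
      field_simp
    set uu : AutW L := e (tau (s / (q.den : ℚ))) with huu
    have hstep : x₀ < ((uu ^ (q.den : ℕ) : AutW L) : Equiv.Perm L) x₀ := by
      rw [huu, ← map_pow, h1]
      exact hsx
    have hux : x₀ < (uu : Equiv.Perm L) x₀ := by
      by_contra hle
      push_neg at hle
      exact absurd hstep (not_lt.2 (pow_apply_le uu hle _))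
    have hfin := lt_pow_apply uu hux hn
    rw [huu, ← map_pow, h2] at hfin
    exact hfin
  have hmono : ∀ r t : ℚ, r < t → ρ r < ρ t := by
    intro r t hrt
    have h1 : tau (s * r) * tau (s * (t - r)) = tau (s * t) := by
      rw [tau_mul]; congr 1; ring
    have h2 : ρ t = (e (tau (s * r)) : Equiv.Perm L)
        ((e (tau (s * (t - r))) : Equiv.Perm L) x₀) := by
      rw [hρ]
      simp only
      rw [← Equiv.Perm.mul_apply, ← MulMemClass.coe_mul, ← map_mul, h1]
    rw [h2]
    exact mono_lt _ (hpos (t - r) (by linarith))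
  -- Step 4: fill the cut of the chain at √2
  set α : ℝ := Real.sqrt 2 with hα
  have hirr : Irrational α := irrational_sqrt_two
  set A : Set L := ρ '' {r : ℚ | (r : ℝ) < α} with hA
  set B : Set L := ρ '' {r : ℚ | α < (r : ℝ)} with hB
  have hAκ : #A < κ := by
    have hAc : A.Countable := (Set.to_countable _).image _
    exact lt_of_le_of_lt (Cardinal.mk_le_aleph0_iff.2 (Set.countable_coe_iff.2 hAc)) hκ
  have hBκ : #B < κ := by
    have hBc : B.Countable := (Set.to_countable _).image _
    exact lt_of_le_of_lt (Cardinal.mk_le_aleph0_iff.2 (Set.countable_coe_iff.2 hBc)) hκ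
  have hABlt : ∀ a ∈ A, ∀ b ∈ B, a < b := by
    rintro a ⟨r, hr, rfl⟩ b ⟨t, ht, rfl⟩
    have hr' : (r : ℝ) < α := hr
    have ht' : α < (t : ℝ) := ht
    exact hmono r t (by exact_mod_cast lt_trans hr' ht')
  obtain ⟨x, hxA, hxB⟩ := fill κ hκ huniv hhom A B hAκ hBκ hABlt
  -- Step 5: continuity data
  obtain ⟨F, hF⟩ := cont_exists_finset e hcont x
  obtain ⟨F₀, hF₀⟩ := cont_exists_finset e hcont x₀
  -- Step 6: choose ε avoiding collisions
  set γ : ℚ → ℝ := fun q => (q : ℝ) - (s : ℝ) * α with hγdef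
  set T : Finset ℝ := insert 1
    ((((F ×ˢ F).filter (fun pq => pq.1 ≠ pq.2)).image (fun pq => |(pq.1 : ℝ) - (pq.2 : ℝ)|))
      ∪ ((F₀ ×ˢ F).image (fun pq => |(pq.1 : ℝ) - γ pq.2|))) with hT
  have hTne : T.Nonempty := ⟨1, Finset.mem_insert_self _ _⟩
  have hTpos : ∀ z ∈ T, 0 < z := by
    intro z hz
    rw [hT] at hz
    rcases Finset.mem_insert.1 hz with rfl | hz'
    · norm_num
    rcases Finset.mem_union.1 hz' with hz2 | hz2
    · obtain ⟨pq, hpq, rfl⟩ := Finset.mem_image.1 hz2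
      have hne := (Finset.mem_filter.1 hpq).2
      have hne2 : (pq.1 : ℝ) ≠ (pq.2 : ℝ) := by exact_mod_cast hne
      exact abs_pos.2 (sub_ne_zero.2 hne2)
    · obtain ⟨pq, hpq, rfl⟩ := Finset.mem_image.1 hz2
      apply abs_pos.2
      apply sub_ne_zero.2
      intro hEq
      have heq2 : (s : ℝ) * α = ((pq.2 - pq.1 : ℚ) : ℝ) := by
        rw [hγdef] at hEq
        push_cast
        simp only at hEq
        linarith
      rcases hs with rfl | rfl
      · rw [show (((1:ℚ) : ℝ)) = 1 by norm_num, one_mul] at heq2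
        exact hirr ⟨_, heq2.symm⟩
      · rw [show (((-1:ℚ) : ℝ)) = -1 by norm_num] at heq2
        have : α = ((-(pq.2 - pq.1) : ℚ) : ℝ) := by push_cast; push_cast at heq2; linarith
        exact hirr ⟨_, this.symm⟩
  set ε : ℝ := T.min' hTne / 2 with hε
  have hεpos : 0 < ε := by
    have := hTpos _ (T.min'_mem hTne)
    rw [hε]
    linarith
  have hK1 : ∀ q ∈ F, ∀ q' ∈ F, q ≠ q' → 2 * ε ≤ |(q : ℝ) - (q' : ℝ)| := by
    intro q hq q' hq' hne
    have hmem : |(q : ℝ) - (q' : ℝ)| ∈ T := by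
      rw [hT]
      apply Finset.mem_insert_of_mem
      apply Finset.mem_union_left
      exact Finset.mem_image.2 ⟨(q, q'),
        Finset.mem_filter.2 ⟨Finset.mem_product.2 ⟨hq, hq'⟩, hne⟩, rfl⟩
    have := T.min'_le _ hmem
    rw [hε]
    linarith
  have hK2 : ∀ p ∈ F₀, ∀ q ∈ F, 2 * ε ≤ |(p : ℝ) - γ q| := by
    intro p hp q hq
    have hmem : |(p : ℝ) - γ q| ∈ T := by
      rw [hT]
      apply Finset.mem_insert_of_mem
      apply Finset.mem_union_right
      exact Finset.mem_image.2 ⟨(p, q), Finset.mem_product.2 ⟨hp, hq⟩, rfl⟩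
    have := T.min'_le _ hmem
    rw [hε]
    linarith
  -- Step 7: choose the gap endpoints and the two rationals r < √2 < r'
  have hchoice : ∀ q : ℚ, ∃ uv : ℚ × ℚ,
      ((γ q - ε < (uv.1 : ℝ)) ∧ ((uv.1 : ℝ) < γ q - ε / 2)) ∧
      ((γ q + ε / 2 < (uv.2 : ℝ)) ∧ ((uv.2 : ℝ) < γ q + ε)) := by
    intro q
    obtain ⟨u1, hu1, hu2⟩ := exists_rat_btwn (show γ q - ε < γ q - ε / 2 by linarith)
    obtain ⟨v1, hv1, hv2⟩ := exists_rat_btwn (show γ q + ε / 2 < γ q + ε by linarith)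
    exact ⟨(u1, v1), ⟨hu1, hu2⟩, hv1, hv2⟩
  choose w hw using hchoice
  obtain ⟨r, hr1, hr2⟩ := exists_rat_btwn (show α - ε / 2 < α by linarith)
  obtain ⟨r', hr'1, hr'2⟩ := exists_rat_btwn (show α < α + ε / 2 by linarith)
  have hab : ∀ q : ℚ, ∀ t : ℚ, α - ε / 2 < (t : ℝ) → (t : ℝ) < α + ε / 2 →
      γ q - ε / 2 < ((q - s * t : ℚ) : ℝ) ∧ ((q - s * t : ℚ) : ℝ) < γ q + ε / 2 := by
    intro q t h1 h2
    have hdiff : ((q - s * t : ℚ) : ℝ) - γ q = (s : ℝ) * (α - (t : ℝ)) := by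
      rw [hγdef]
      push_cast
      ring
    have habs3 : |((q - s * t : ℚ) : ℝ) - γ q| < ε / 2 := by
      rw [hdiff, abs_mul, habs, one_mul]
      rw [abs_lt]
      constructor <;> linarith
    have h4 := abs_lt.1 habs3
    constructor <;> [linarith [h4.1]; linarith [h4.2]]
  -- Step 8: build the list of gap movers and the automorphism h
  set mk4 : ℚ → ℚ × ℚ × ℚ × ℚ := fun q => ((w q).1, q - s * r, q - s * r', (w q).2) with hmk
  set l : List (ℚ × ℚ × ℚ × ℚ) := (F.sort (· ≤ ·)).map mk4 with hl
  have hok : ∀ p ∈ l, p.1 < p.2.1 ∧ p.1 < p.2.2.1 ∧ p.2.1 < p.2.2.2 ∧ p.2.2.1 < p.2.2.2 := by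
    intro p hp
    rw [hl] at hp
    obtain ⟨q, hq, rfl⟩ := List.mem_map.1 hp
    have har := hab q r hr1 (lt_trans hr2 (by linarith))
    have har' := hab q r' (lt_trans (by linarith) hr'1) hr'2
    have hu1 := (hw q).1.2
    have hv1 := (hw q).2.1
    refine ⟨?_, ?_, ?_, ?_⟩ <;>
      [ (exact_mod_cast lt_trans hu1 har.1);
        (exact_mod_cast lt_trans hu1 har'.1);
        (exact_mod_cast lt_trans har.2 hv1);
        (exact_mod_cast lt_trans har'.2 hv1) ]
  have hsep : l.Pairwise (fun p q => p.2.2.2 ≤ q.1) := by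
    rw [hl, List.pairwise_map]
    have hsorted : (F.sort (· ≤ ·)).Pairwise (· < ·) := (F.sortedLT_sort).pairwise
    refine List.Pairwise.imp_of_mem ?_ hsorted
    intro q q' hqmem hq'mem hlt
    have hqF : q ∈ F := (Finset.mem_sort _).1 hqmem
    have hq'F : q' ∈ F := (Finset.mem_sort _).1 hq'mem
    have h2e := hK1 q hqF q' hq'F (ne_of_lt hlt)
    have habs2 : |(q : ℝ) - (q' : ℝ)| = (q' : ℝ) - (q : ℝ) := by
      rw [abs_sub_comm]
      exact abs_of_pos (by exact_mod_cast sub_pos.2 hlt)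
    have hγgap : γ q + ε ≤ γ q' - ε := by
      rw [hγdef]
      simp only
      rw [habs2] at h2e
      linarith
    have hcast : ((w q).2 : ℝ) < ((w q').1 : ℝ) := by
      have h1 := (hw q).2.2
      have h2 := (hw q').1.1
      linarith
    show (mk4 q).2.2.2 ≤ (mk4 q').1
    rw [hmk]
    simp only
    exact_mod_cast hcast.le
  obtain ⟨h, hhfix, hhmap⟩ := extlist l hok hsep
  have hhx₀ : (e h : Equiv.Perm L) x₀ = x₀ := by
    apply hF₀
    intro p hp
    apply hhfix
    intro pq hpq
    rw [hl] at hpq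
    obtain ⟨q, hq, rfl⟩ := List.mem_map.1 hpq
    have hqF : q ∈ F := (Finset.mem_sort _).1 hq
    have h2e := hK2 p hp q hqF
    rcases le_or_gt ((p : ℝ)) (γ q) with hle | hgt
    · left
      have habs4 : |(p : ℝ) - γ q| = γ q - (p : ℝ) := by
        rw [abs_sub_comm]
        exact abs_of_nonneg (by linarith)
      rw [habs4] at h2e
      have h3 := (hw q).1.1
      have : (p : ℝ) < ((w q).1 : ℝ) := by linarith
      show p ≤ (mk4 q).1
      rw [hmk]
      simp only
      exact_mod_cast this.le
    · right
      have habs4 : |(p : ℝ) - γ q| = (p : ℝ) - γ q := abs_of_nonneg (by linarith)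
      rw [habs4] at h2e
      have h3 := (hw q).2.2
      have : ((w q).2 : ℝ) < (p : ℝ) := by linarith
      show (mk4 q).2.2.2 ≤ p
      rw [hmk]
      simp only
      exact_mod_cast this.le
  -- Step 9: the contradicting element g
  set g : relAut (fun a b : ℚ => a < b) := tau (s * r') * h * (tau (s * r))⁻¹ with hg
  have hgF : ∀ q ∈ F, (g : Equiv.Perm ℚ) q = q := by
    intro q hq
    rw [hg, MulMemClass.coe_mul, MulMemClass.coe_mul, Equiv.Perm.mul_apply,
      Equiv.Perm.mul_apply, tau_inv_apply]
    have hmem : mk4 q ∈ l := by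
      rw [hl]
      exact List.mem_map.2 ⟨q, (Finset.mem_sort _).2 hq, rfl⟩
    have hmap := hhmap _ hmem
    rw [hmk] at hmap
    simp only at hmap
    have hsub : q - s * r = (mk4 q).2.1 := by rw [hmk]
    rw [show ((h : Equiv.Perm ℚ)) (q - s * r) = q - s * r' from hmap]
    rw [tau_apply]
    ring
  have hgx : (e g : Equiv.Perm L) x = x := hF g hgF
  have hgρ : (e g : Equiv.Perm L) (ρ r) = ρ r' := by
    rw [hρ]
    simp only
    rw [← Equiv.Perm.mul_apply, ← MulMemClass.coe_mul, ← map_mul]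
    have hgr : g * tau (s * r) = tau (s * r') * h := by
      rw [hg, inv_mul_cancel_right]
    rw [hgr, map_mul, MulMemClass.coe_mul, Equiv.Perm.mul_apply, hhx₀]
  have h1 : ρ r < x := hxA _ (Set.mem_image_of_mem ρ hr2)
  have h2 : x < ρ r' := hxB _ (Set.mem_image_of_mem ρ hr'1)
  have h3 : (e g : Equiv.Perm L) (ρ r) < (e g : Equiv.Perm L) x := mono_lt _ h1
  rw [hgρ, hgx] at h3
  exact absurd h2 (not_lt.2 h3.le)
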